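/- Let V satisfy the Assumption, let M = sup{|∂ₓ^α V(t,x)| : (t,x) ∈ ℝ^{1+n}, |α| = 2}, and fix 0 < T < π/√M. For t ∈ (0,T) and x, y, x′, ξ ∈ ℝⁿ, let (x^{(1)}(s), ξ^{(1)}(s)) = (x^{(1)}(s;t,x,y), ξ^{(1)}(s;t,x,y)) solve the Hamiltonian system with x^{(1)}(0) = y, x^{(1)}(t) = x, and let (x^{(2)}(s), ξ^{(2)}(s)) = (x^{(2)}(s;t,x′,ξ), ξ^{(2)}(s;t,x′,ξ)) solve it with x^{(2)}(t) = x′, ξ^{(2)}(t) = ξ. Then there exists C₁ > 0 such that |x^{(1)}(s;t,x,y) − x^{(2)}(s;t,x′,ξ)| ≤ C₁ ( |x − x′| + |y − x^{(2)}(0;t,x′,ξ)| ) for all 0 ≤ s ≤ t, 0 < t < T and x, y, x′, ξ ∈ ℝⁿ. -/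

import Mathlib

open MeasureTheory
open scoped Real

section SturmAux

open Set

set_option maxHeartbeats 1000000

/-- Scalar positivity fact used in the Sturm comparison argument. -/
lemma sturm_aux_pos (K ε A B P F C0 S r : ℝ) (hK : 0 < K) (hε : 0 < ε) (hC0 : 0 < C0)
    (hA : 0 ≤ A) (hF : 0 ≤ F) (hcauchy : P * P ≤ F * A) (hBF : -(K * F) ≤ B)
    (hPC : P * C0 = -((F + ε) * (S * r))) (hrK : r ^ 2 = K) :
    0 < ((2 * (A + B)) * C0 ^ 2 + (2 * P) * (2 * C0 * (-S * r)))
      - ((2 * P) * (2 * C0 * (-S * r))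
        + (F + ε) * (2 * (-S * r) * (-S * r) + 2 * C0 * (-(C0 * r) * r))) := by
  have hFe : 0 < F + ε := by linarith
  have hsq : ((F + ε) * (S * r)) ^ 2 = (P * C0) ^ 2 := by rw [hPC]; ring
  set G := ((2 * (A + B)) * C0 ^ 2 + (2 * P) * (2 * C0 * (-S * r)))
      - ((2 * P) * (2 * C0 * (-S * r))
        + (F + ε) * (2 * (-S * r) * (-S * r) + 2 * C0 * (-(C0 * r) * r))) with hGdef
  have hid : (F + ε) * G =
      2 * (A + B) * C0 ^ 2 * (F + ε) - 2 * (P * C0) ^ 2 + 2 * C0 ^ 2 * K * (F + ε) ^ 2 := by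
    rw [hGdef]
    linear_combination (-2 : ℝ) * hsq + (2 * C0 ^ 2 * (F + ε) ^ 2) * hrK
  have h1 : P * P * (C0 * C0) ≤ F * A * (C0 * C0) :=
    mul_le_mul_of_nonneg_right hcauchy (mul_nonneg hC0.le hC0.le)
  have h2 : (-(K * F)) * (C0 * C0 * (F + ε)) ≤ B * (C0 * C0 * (F + ε)) :=
    mul_le_mul_of_nonneg_right hBF (by positivity)
  have h3 : 0 < K * ε * (C0 * C0) * (F + ε) := by positivity
  have h4 : 0 ≤ A * (C0 * C0) * ε := by positivity
  have hpos2 : 0 < (F + ε) * G := by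
    rw [hid]
    nlinarith [h1, h2, h3, h4]
  by_contra hG
  push_neg at hG
  have : (F + ε) * G ≤ 0 := mul_nonpos_of_nonneg_of_nonpos hFe.le hG
  linarith

/-- Sturm-type comparison estimate: if `w' = v`, `v' = g` with `‖g‖ ≤ K ‖w‖`, `0 < K`,
and `√K · T < π`, then on `[0,t]` with `t < T` the function `w` is controlled by its
boundary values. -/
lemma sturm_comparison {E : Type*} [NormedAddCommGroup E] [InnerProductSpace ℝ E]
    {K T t : ℝ} (hK : 0 < K) (hTK : Real.sqrt K * T < π)
    (ht : 0 < t) (htT : t < T)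
    (w v g : ℝ → E)
    (hw : ∀ s, HasDerivAt w (v s) s)
    (hv : ∀ s, HasDerivAt v (g s) s)
    (hg : ∀ s, ‖g s‖ ≤ K * ‖w s‖) :
    ∀ s ∈ Set.Icc (0:ℝ) t, ‖w s‖ ≤ (1 / Real.cos (Real.sqrt K * T / 2)) * (‖w t‖ + ‖w 0‖) := by
  have hT : 0 < T := ht.trans htT
  set r := Real.sqrt K with hrdef
  have hr : 0 < r := Real.sqrt_pos.mpr hK
  have hrK : r ^ 2 = K := Real.sq_sqrt hK.le
  set δ := Real.cos (r * T / 2) with hδdef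
  have hδ : 0 < δ := by
    apply Real.cos_pos_of_mem_Ioo
    constructor
    · nlinarith [Real.pi_pos, mul_pos hr hT]
    · nlinarith [mul_pos hr hT]
  have hδ1 : δ ≤ 1 := Real.cos_le_one _
  set c : ℝ → ℝ := fun s => Real.cos (r * (s - t / 2)) with hcdef
  set sn : ℝ → ℝ := fun s => Real.sin (r * (s - t / 2)) with hsndef
  have hlin : ∀ s : ℝ, HasDerivAt (fun s : ℝ => r * (s - t / 2)) r s := by
    intro s
    simpa using ((hasDerivAt_id s).sub_const (t / 2)).const_mul r
  have hc : ∀ s, HasDerivAt c (-sn s * r) s := by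
    intro s
    simpa [hcdef, hsndef, Function.comp_def] using (Real.hasDerivAt_cos (r * (s - t / 2))).comp s (hlin s)
  have hsn : ∀ s, HasDerivAt sn (c s * r) s := by
    intro s
    simpa [hcdef, hsndef, Function.comp_def] using (Real.hasDerivAt_sin (r * (s - t / 2))).comp s (hlin s)
  have hcb : ∀ s ∈ Icc (0:ℝ) t, δ ≤ c s := by
    intro s hs
    have habs : |r * (s - t / 2)| ≤ r * T / 2 := by
      rw [abs_mul, abs_of_pos hr]
      have h1 : |s - t / 2| ≤ t / 2 := abs_le.mpr ⟨by linarith [hs.1], by linarith [hs.2]⟩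
      nlinarith
    calc δ ≤ Real.cos |r * (s - t / 2)| := by
          apply Real.cos_le_cos_of_nonneg_of_le_pi (abs_nonneg _) _ habs
          nlinarith [Real.pi_pos, mul_pos hr hT]
      _ = c s := Real.cos_abs _
  have hcpos : ∀ s ∈ Icc (0:ℝ) t, 0 < c s := fun s hs => hδ.trans_le (hcb s hs)
  have hc1 : ∀ s, c s ≤ 1 := fun s => Real.cos_le_one _
  set f : ℝ → ℝ := fun s => (inner ℝ (w s) (w s) : ℝ) with hfdef
  set p : ℝ → ℝ := fun s => (inner ℝ (w s) (v s) : ℝ) with hpdef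
  have hfd : ∀ s, HasDerivAt f (2 * p s) s := by
    intro s
    have h := (hw s).inner ℝ (hw s)
    refine h.congr_deriv ?_
    simp only [hpdef]
    rw [real_inner_comm (w s) (v s)]
    ring
  have hpd : ∀ s, HasDerivAt p ((inner ℝ (v s) (v s) : ℝ) + (inner ℝ (w s) (g s) : ℝ)) s := by
    intro s
    have h := (hw s).inner ℝ (hv s)
    refine h.congr_deriv ?_
    ring
  have hf0 : ∀ s, 0 ≤ f s := fun s => real_inner_self_nonneg
  have hvv0 : ∀ s, 0 ≤ (inner ℝ (v s) (v s) : ℝ) := fun s => real_inner_self_nonneg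
  have hδ2 : (0:ℝ) < δ ^ 2 := by positivity
  -- key estimate with ε
  have key : ∀ ε : ℝ, 0 < ε → ∀ s ∈ Icc (0:ℝ) t,
      f s + ε ≤ ((f t + ε) + (f 0 + ε)) / δ ^ 2 := by
    intro ε hε
    set Q : ℝ → ℝ := fun s => (f s + ε) / (c s) ^ 2 with hQdef
    set W : ℝ → ℝ := fun s => (2 * p s) * (c s) ^ 2 - (f s + ε) * (2 * c s * (-sn s * r))
      with hWdef
    have hc2 : ∀ s, HasDerivAt (fun s => (c s) ^ 2) (2 * c s * (-sn s * r)) s := by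
      intro s
      have := (hc s).pow 2
      refine this.congr_deriv ?_
      ring
    have hQd : ∀ s ∈ Icc (0:ℝ) t, HasDerivAt Q (W s / ((c s) ^ 2) ^ 2) s := by
      intro s hs
      have h0 : (c s) ^ 2 ≠ 0 := pow_ne_zero _ (hcpos s hs).ne'
      exact ((hfd s).add_const ε).div (hc2 s) h0
    have hQcont : ContinuousOn Q (Icc 0 t) :=
      fun s hs => ((hQd s hs).continuousAt).continuousWithinAt
    obtain ⟨s₀, hs₀, hmax⟩ := isCompact_Icc.exists_isMaxOn ⟨0, left_mem_Icc.mpr ht.le⟩ hQcont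
    have hQle : ∀ s ∈ Icc (0:ℝ) t, Q s ≤ max (Q 0) (Q t) := by
      rcases eq_or_lt_of_le hs₀.1 with h0 | h0
      · intro s hs
        exact le_max_of_le_left (h0 ▸ hmax hs)
      rcases eq_or_lt_of_le hs₀.2 with ht0 | ht0
      · intro s hs
        exact le_max_of_le_right (ht0 ▸ hmax hs)
      -- interior maximum: contradiction
      exfalso
      have hcs₀ : 0 < c s₀ := hcpos s₀ hs₀
      have hW0 : W s₀ = 0 := by
        have hloc : IsLocalMax Q s₀ := hmax.isLocalMax (Icc_mem_nhds h0 ht0)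
        have hz := hloc.hasDerivAt_eq_zero (hQd s₀ hs₀)
        rcases div_eq_zero_iff.mp hz with h | h
        · exact h
        · exact absurd h (by positivity)
      -- derivative of W at s₀
      have hA : HasDerivAt (fun s => (2 * p s) * (c s) ^ 2)
          ((2 * ((inner ℝ (v s₀) (v s₀) : ℝ) + (inner ℝ (w s₀) (g s₀) : ℝ))) * (c s₀) ^ 2
            + (2 * p s₀) * (2 * c s₀ * (-sn s₀ * r))) s₀ :=
        ((hpd s₀).const_mul 2).mul (hc2 s₀)
      have h3 : HasDerivAt (fun s => -sn s * r) (-(c s₀ * r) * r) s₀ :=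
        ((hsn s₀).neg).mul_const r
      have h4 : HasDerivAt (fun s => 2 * c s) (2 * (-sn s₀ * r)) s₀ := (hc s₀).const_mul 2
      have h5 : HasDerivAt (fun s => 2 * c s * (-sn s * r))
          (2 * (-sn s₀ * r) * (-sn s₀ * r) + 2 * c s₀ * (-(c s₀ * r) * r)) s₀ := h4.mul h3
      have h6 : HasDerivAt (fun s => (f s + ε) * (2 * c s * (-sn s * r)))
          ((2 * p s₀) * (2 * c s₀ * (-sn s₀ * r))
            + (f s₀ + ε) * (2 * (-sn s₀ * r) * (-sn s₀ * r) + 2 * c s₀ * (-(c s₀ * r) * r))) s₀ :=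
        ((hfd s₀).add_const ε).mul h5
      have hWd : HasDerivAt W
          (((2 * ((inner ℝ (v s₀) (v s₀) : ℝ) + (inner ℝ (w s₀) (g s₀) : ℝ))) * (c s₀) ^ 2
            + (2 * p s₀) * (2 * c s₀ * (-sn s₀ * r)))
          - ((2 * p s₀) * (2 * c s₀ * (-sn s₀ * r))
            + (f s₀ + ε) * (2 * (-sn s₀ * r) * (-sn s₀ * r) + 2 * c s₀ * (-(c s₀ * r) * r)))) s₀ :=
        hA.sub h6
      -- positivity of the derivative of W at s₀
      have hPC : p s₀ * c s₀ = -((f s₀ + ε) * (sn s₀ * r)) := by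
        have hfac : 2 * c s₀ * (p s₀ * c s₀ + (f s₀ + ε) * (sn s₀ * r)) = 0 := by
          have h := hW0
          rw [hWdef] at h
          linear_combination h
        rcases mul_eq_zero.mp hfac with h | h
        · nlinarith
        · linarith
      have hcauchy : p s₀ * p s₀ ≤ f s₀ * (inner ℝ (v s₀) (v s₀) : ℝ) :=
        real_inner_mul_inner_self_le (w s₀) (v s₀)
      have hBF : -(K * f s₀) ≤ (inner ℝ (w s₀) (g s₀) : ℝ) := by
        have h1 := abs_real_inner_le_norm (w s₀) (g s₀)
        have h2 := hg s₀
        have h3 : f s₀ = ‖w s₀‖ ^ 2 := real_inner_self_eq_norm_sq _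
        have h4 := abs_le.mp h1
        nlinarith [norm_nonneg (w s₀), norm_nonneg (g s₀)]
      have hsq : ((f s₀ + ε) * (sn s₀ * r)) ^ 2 = (p s₀ * c s₀) ^ 2 := by
        rw [hPC]; ring
      have hFe : 0 < f s₀ + ε := by linarith [hf0 s₀]
      have hDpos : 0 <
          (((2 * ((inner ℝ (v s₀) (v s₀) : ℝ) + (inner ℝ (w s₀) (g s₀) : ℝ))) * (c s₀) ^ 2
            + (2 * p s₀) * (2 * c s₀ * (-sn s₀ * r)))
          - ((2 * p s₀) * (2 * c s₀ * (-sn s₀ * r))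
            + (f s₀ + ε) * (2 * (-sn s₀ * r) * (-sn s₀ * r) + 2 * c s₀ * (-(c s₀ * r) * r)))) := by
        exact sturm_aux_pos K ε _ _ _ _ _ _ _ hK hε hcs₀ (hvv0 s₀) (hf0 s₀)
          hcauchy hBF hPC hrK
      -- W is positive just to the right of s₀
      have hWpos : ∀ᶠ x in nhdsWithin s₀ (Set.Ioi s₀), 0 < W x := by
        have hten := hasDerivAt_iff_tendsto_slope.mp hWd
        have hten2 : Filter.Tendsto (slope W s₀) (nhdsWithin s₀ (Set.Ioi s₀)) (nhds _) :=
          hten.mono_left (nhdsWithin_mono _ (fun x hx => Set.mem_compl_singleton_iff.mpr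
            (ne_of_gt hx)))
        filter_upwards [hten2.eventually (eventually_gt_nhds hDpos), self_mem_nhdsWithin]
          with x hx1 hx2
        have hxs : 0 < x - s₀ := sub_pos.mpr hx2
        have hslope : slope W s₀ x = W x / (x - s₀) := by
          rw [slope_def_field, hW0, sub_zero]
        rw [hslope] at hx1
        have h := mul_pos hx1 hxs
        rwa [div_mul_cancel₀ _ hxs.ne'] at h
      obtain ⟨b, hb, hsub⟩ := mem_nhdsGT_iff_exists_Ioo_subset.mp hWpos
      set s₁ := min ((s₀ + b) / 2) ((s₀ + t) / 2) with hs₁def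
      have hbmem : s₀ < b := hb
      have h01 : s₀ < s₁ := lt_min (by linarith) (by linarith)
      have hs₁t : s₁ < t := (min_le_right _ _).trans_lt (by linarith)
      have hs₁b : s₁ < b := (min_le_left _ _).trans_lt (by linarith)
      have hmono : StrictMonoOn Q (Icc s₀ s₁) := by
        apply strictMonoOn_of_deriv_pos (convex_Icc _ _)
        · intro x hx
          exact ((hQd x ⟨hs₀.1.trans hx.1, hx.2.trans hs₁t.le⟩).continuousAt).continuousWithinAt
        · intro x hx
          rw [interior_Icc] at hx
          have hxI : x ∈ Icc (0:ℝ) t := ⟨hs₀.1.trans hx.1.le, by linarith [hx.2]⟩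
          rw [(hQd x hxI).deriv]
          have hWx : 0 < W x := hsub ⟨hx.1, hx.2.trans hs₁b⟩
          have hcx : 0 < c x := hcpos x hxI
          positivity
      have hlt : Q s₀ < Q s₁ :=
        hmono (left_mem_Icc.mpr h01.le) (right_mem_Icc.mpr h01.le) h01
      have hle : Q s₁ ≤ Q s₀ := hmax ⟨hs₀.1.trans h01.le, hs₁t.le⟩
      linarith
    -- conclude the key estimate
    intro s hs
    have hcs : 0 < c s := hcpos s hs
    have h1 : f s + ε ≤ Q s := by
      rw [hQdef]
      rw [le_div_iff₀ (by positivity)]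
      have hc2le : (c s) ^ 2 ≤ 1 := by nlinarith [hc1 s, hcs]
      have hfen : (0:ℝ) ≤ f s + ε := by linarith [hf0 s]
      have hmm := mul_le_mul_of_nonneg_left hc2le hfen
      linarith [hmm]
    have hQ0 : Q 0 ≤ (f 0 + ε) / δ ^ 2 := by
      apply div_le_div_of_nonneg_left (by linarith [hf0 0]) hδ2
      nlinarith [hcb 0 (left_mem_Icc.mpr ht.le), hδ]
    have hQt : Q t ≤ (f t + ε) / δ ^ 2 := by
      apply div_le_div_of_nonneg_left (by linarith [hf0 t]) hδ2
      nlinarith [hcb t (right_mem_Icc.mpr ht.le), hδ]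
    have h2 : Q s ≤ max (Q 0) (Q t) := hQle s hs
    have h3 : max (Q 0) (Q t) ≤ ((f t + ε) + (f 0 + ε)) / δ ^ 2 := by
      apply max_le
      · refine hQ0.trans ((div_le_div_iff_of_pos_right hδ2).mpr ?_)
        linarith [hf0 t]
      · refine hQt.trans ((div_le_div_iff_of_pos_right hδ2).mpr ?_)
        linarith [hf0 0]
    linarith
  -- let ε → 0
  intro s hs
  have hfle : f s * δ ^ 2 ≤ f t + f 0 := by
    by_contra hcon
    push_neg at hcon
    set gap := f s * δ ^ 2 - (f t + f 0) with hgap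
    have hgap0 : 0 < gap := by simp only [hgap]; linarith
    have hε : 0 < gap / 4 := by linarith
    have h := key (gap / 4) hε s hs
    rw [le_div_iff₀ hδ2] at h
    nlinarith [hδ2, hδ1, hδ]
  -- convert to norms
  have hfs : f s = ‖w s‖ ^ 2 := real_inner_self_eq_norm_sq _
  have hft : f t = ‖w t‖ ^ 2 := real_inner_self_eq_norm_sq _
  have hf00 : f 0 = ‖w 0‖ ^ 2 := real_inner_self_eq_norm_sq _
  rw [hfs, hft, hf00] at hfle
  have hmul : ‖w s‖ * δ ≤ ‖w t‖ + ‖w 0‖ := by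
    nlinarith [norm_nonneg (w s), norm_nonneg (w t), norm_nonneg (w 0), hδ,
      mul_nonneg (norm_nonneg (w t)) (norm_nonneg (w 0))]
  rw [one_div, inv_mul_eq_div, le_div_iff₀ hδ]
  exact hmul

end SturmAux

/-- The Assumption on the potential `V`: for every fixed `t`, `V(t,·) ∈ C²(ℝⁿ)`;
the spatial derivatives of order `≤ 2` are (jointly) continuous in `(t,x)`;
and the second spatial derivative is uniformly bounded. -/
def PotAssumption (n : ℕ) (V : ℝ → EuclideanSpace ℝ (Fin n) → ℝ) : Prop :=
  (∀ t, ContDiff ℝ 2 (V t)) ∧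
  (Continuous fun p : ℝ × EuclideanSpace ℝ (Fin n) => V p.1 p.2) ∧
  (Continuous fun p : ℝ × EuclideanSpace ℝ (Fin n) => fderiv ℝ (V p.1) p.2) ∧
  (Continuous fun p : ℝ × EuclideanSpace ℝ (Fin n) => iteratedFDeriv ℝ 2 (V p.1) p.2) ∧
  (∃ C > 0, ∀ t x, ‖iteratedFDeriv ℝ 2 (V t) x‖ ≤ C)

/-- Under the Assumption, with
`M = sup |∂ₓ²V|` and `0 < T < π/√M` (encoded as `T·√M < π`), there is `C₁ > 0` such that
whenever `(x⁽¹⁾, ξ⁽¹⁾)` solves the Hamiltonian system with `x⁽¹⁾(0) = y`, `x⁽¹⁾(t) = x`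
and `(x⁽²⁾, ξ⁽²⁾)` solves it with `x⁽²⁾(t) = x′`, `ξ⁽²⁾(t) = ξ`, then
`|x⁽¹⁾(s) − x⁽²⁾(s)| ≤ C₁ (|x − x′| + |y − x⁽²⁾(0)|)` for all `0 ≤ s ≤ t < T`. -/
theorem stmt_5 (n : ℕ) (V : ℝ → EuclideanSpace ℝ (Fin n) → ℝ) (hV : PotAssumption n V)
    (M : ℝ)
    (hM : M = ⨆ p : ℝ × EuclideanSpace ℝ (Fin n), ‖iteratedFDeriv ℝ 2 (V p.1) p.2‖)
    (T : ℝ) (hT : 0 < T) (hTM : T * Real.sqrt M < π) :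
    ∃ C₁ > 0, ∀ t ∈ Set.Ioo (0 : ℝ) T, ∀ x y x' ξ : EuclideanSpace ℝ (Fin n),
      ∀ x1 ξ1 x2 ξ2 : ℝ → EuclideanSpace ℝ (Fin n),
        (∀ s, HasDerivAt x1 (ξ1 s) s ∧ HasDerivAt ξ1 (-(gradient (V s) (x1 s))) s) →
        x1 0 = y → x1 t = x →
        (∀ s, HasDerivAt x2 (ξ2 s) s ∧ HasDerivAt ξ2 (-(gradient (V s) (x2 s))) s) →
        x2 t = x' → ξ2 t = ξ →
        ∀ s ∈ Set.Icc (0 : ℝ) t,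
          ‖x1 s - x2 s‖ ≤ C₁ * (‖x - x'‖ + ‖y - x2 0‖) := by
  classical
  obtain ⟨C, hCpos, hCb⟩ := hV.2.2.2.2
  have hbdd : BddAbove (Set.range fun p : ℝ × EuclideanSpace ℝ (Fin n) =>
      ‖iteratedFDeriv ℝ 2 (V p.1) p.2‖) := by
    refine ⟨C, ?_⟩
    rintro _ ⟨p, rfl⟩
    exact hCb p.1 p.2
  have hMle : ∀ τ (x : EuclideanSpace ℝ (Fin n)), ‖iteratedFDeriv ℝ 2 (V τ) x‖ ≤ M := by
    intro τ x
    rw [hM]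
    exact le_ciSup hbdd (τ, x)
  set K := max M ((π / (2 * T)) ^ 2) with hKdef
  have hKpos : 0 < K := lt_max_of_lt_right (by positivity)
  have hMK : M ≤ K := le_max_left _ _
  have hTK : Real.sqrt K * T < π := by
    rcases max_cases M ((π / (2 * T)) ^ 2) with ⟨hEq, _⟩ | ⟨hEq, _⟩
    · rw [hKdef, hEq, mul_comm]
      exact hTM
    · rw [hKdef, hEq, Real.sqrt_sq (by positivity)]
      have hπ : π / (2 * T) * T = π / 2 := by field_simp
      rw [hπ]
      linarith [Real.pi_pos]
  -- Lipschitz bound for the gradient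
  have hlip : ∀ τ (a b : EuclideanSpace ℝ (Fin n)),
      ‖gradient (V τ) a - gradient (V τ) b‖ ≤ M * ‖a - b‖ := by
    intro τ a b
    have hcd : ContDiff ℝ 1 (fderiv ℝ (V τ)) := (hV.1 τ).fderiv_right (by norm_num)
    have hdiff : ∀ x ∈ (Set.univ : Set (EuclideanSpace ℝ (Fin n))),
        DifferentiableAt ℝ (fderiv ℝ (V τ)) x :=
      fun x _ => (hcd.differentiable one_ne_zero) x
    have hbound : ∀ x ∈ (Set.univ : Set (EuclideanSpace ℝ (Fin n))),
        ‖fderiv ℝ (fderiv ℝ (V τ)) x‖ ≤ M := by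
      intro x _
      have h1 : ‖fderiv ℝ (fderiv ℝ (V τ)) x‖ = ‖iteratedFDeriv ℝ 2 (V τ) x‖ := by
        calc ‖fderiv ℝ (fderiv ℝ (V τ)) x‖
            = ‖iteratedFDeriv ℝ 0 (fderiv ℝ (fderiv ℝ (V τ))) x‖ := by
              rw [norm_iteratedFDeriv_zero]
          _ = ‖iteratedFDeriv ℝ 1 (fderiv ℝ (V τ)) x‖ := norm_iteratedFDeriv_fderiv
          _ = ‖iteratedFDeriv ℝ 2 (V τ) x‖ := norm_iteratedFDeriv_fderiv
      rw [h1]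
      exact hMle τ x
    have h := Convex.norm_image_sub_le_of_norm_fderiv_le hdiff hbound convex_univ
      (Set.mem_univ b) (Set.mem_univ a)
    have hgr : gradient (V τ) a - gradient (V τ) b =
        (InnerProductSpace.toDual ℝ (EuclideanSpace ℝ (Fin n))).symm
          (fderiv ℝ (V τ) a - fderiv ℝ (V τ) b) := by
      simp [gradient, map_sub]
    rw [hgr, LinearIsometryEquiv.norm_map]
    exact h
  refine ⟨1 / Real.cos (Real.sqrt K * T / 2), ?_, ?_⟩
  · have hKT0 : 0 ≤ Real.sqrt K * T := mul_nonneg (Real.sqrt_nonneg _) hT.le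
    have : 0 < Real.cos (Real.sqrt K * T / 2) := by
      apply Real.cos_pos_of_mem_Ioo
      constructor
      · nlinarith [Real.pi_pos]
      · nlinarith
    positivity
  · intro t htI x y x' ξ x1 ξ1 x2 ξ2 h1 h10 h1t h2 h2t hξ s hs
    have hw : ∀ s, HasDerivAt (fun s => x1 s - x2 s) (ξ1 s - ξ2 s) s :=
      fun s => ((h1 s).1).sub ((h2 s).1)
    have hv : ∀ s, HasDerivAt (fun s => ξ1 s - ξ2 s)
        (gradient (V s) (x2 s) - gradient (V s) (x1 s)) s := by
      intro s
      have h := ((h1 s).2).sub ((h2 s).2)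
      have hne : -(gradient (V s) (x1 s)) - -(gradient (V s) (x2 s)) =
          gradient (V s) (x2 s) - gradient (V s) (x1 s) := by abel
      rwa [hne] at h
    have hgb : ∀ s, ‖gradient (V s) (x2 s) - gradient (V s) (x1 s)‖ ≤
        K * ‖(fun s => x1 s - x2 s) s‖ := by
      intro s
      calc ‖gradient (V s) (x2 s) - gradient (V s) (x1 s)‖
          ≤ M * ‖x2 s - x1 s‖ := hlip s (x2 s) (x1 s)
        _ = M * ‖x1 s - x2 s‖ := by rw [norm_sub_rev]
        _ ≤ K * ‖x1 s - x2 s‖ := mul_le_mul_of_nonneg_right hMK (norm_nonneg _)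
    have hst := sturm_comparison hKpos hTK htI.1 htI.2 _ _ _ hw hv hgb s hs
    rw [h1t, h2t, h10] at hst
    exact hst
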